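/- With q = 1/1.409, one cannot place 12 points in the annulus {P : 1 ≤ |P| ≤ 1.32} of the Euclidean plane with pairwise distances at least q. (The minimal pairwise angle at the origin is Φ_q(1,1.32) ≈ 31.18°, and 12 · Φ_q(1,1.32) > 360°.) -/

import Mathlib

open Complex in
lemma re_mul_conj (z w : ℂ) (hz : z ≠ 0) (hw : w ≠ 0) :
    (z * (starRingEnd ℂ) w).re = ‖z‖ * ‖w‖ * Real.cos (z.arg - w.arg) := by
  have h1 := Complex.cos_arg hz
  have h2 := Complex.cos_arg hw
  have h3 := Complex.sin_arg z
  have h4 := Complex.sin_arg w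
  have a1 : (‖z‖) ≠ 0 := by simpa using hz
  have a2 : (‖w‖) ≠ 0 := by simpa using hw
  rw [Real.cos_sub, h1, h2, h3, h4]
  simp [Complex.mul_re, Complex.conj_re, Complex.conj_im]
  field_simp

lemma cos_bound (a b c : ℝ) (ha : 1 ≤ a) (ha' : a ≤ 1.32) (hb : 1 ≤ b) (hb' : b ≤ 1.32)
    (h : ((1:ℝ)/1.409)^2 ≤ a^2 + b^2 - 2*(a*b*c)) : c < Real.sqrt 3 / 2 := by
  have h3 : (1.732:ℝ) < Real.sqrt 3 := by
    rw [show (1.732:ℝ) = Real.sqrt (1.732^2) by rw [Real.sqrt_sq]; norm_num]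
    apply Real.sqrt_lt_sqrt <;> norm_num
  have hab : (1:ℝ) ≤ a*b := by nlinarith
  have hc : c ≤ 0.866 := by
    nlinarith [mul_nonneg (sub_nonneg.2 ha) (sub_nonneg.2 hb),
      mul_nonneg (sub_nonneg.2 ha') (sub_nonneg.2 hb'),
      mul_nonneg (sub_nonneg.2 ha) (sub_nonneg.2 hb'),
      mul_nonneg (sub_nonneg.2 hb) (sub_nonneg.2 ha')]
  linarith

/-- No 12 points with pairwise distances ≥ q = 1/1.409 in the annulus 1 ≤ ρ ≤ 1.32. -/
theorem stmt_6 :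
    ¬ ∃ X : Fin 12 → EuclideanSpace ℝ (Fin 2),
      Function.Injective X ∧
      (∀ i, (1 : ℝ) ≤ ‖X i‖ ∧ ‖X i‖ ≤ 1.32) ∧
      (∀ i j, i ≠ j → (1 / 1.409 : ℝ) ≤ dist (X i) (X j)) := by
  rintro ⟨X, hinj, hnorm, hdist⟩
  set z : Fin 12 → ℂ := fun i => ⟨X i 0, X i 1⟩ with hzdef
  have habs : ∀ i, ‖z i‖ = ‖X i‖ := by
    intro i
    rw [EuclideanSpace.norm_eq, Complex.norm_def, Complex.normSq_apply]
    simp [hzdef, Fin.sum_univ_two, Real.norm_eq_abs, sq_abs, sq]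
  have hdz : ∀ i j, ‖z i - z j‖ = dist (X i) (X j) := by
    intro i j
    rw [EuclideanSpace.dist_eq, Complex.norm_def, Complex.normSq_apply]
    simp [hzdef, Fin.sum_univ_two, Real.dist_eq, sq_abs, sq]
  have hz0 : ∀ i, z i ≠ 0 := by
    intro i hzi
    have := (hnorm i).1
    rw [← habs i, hzi] at this
    simp at this; linarith
  set θ : Fin 12 → ℝ := fun i => (z i).arg with hθdef
  have hθlo : ∀ i, -Real.pi < θ i := fun i => Complex.neg_pi_lt_arg _
  have hθhi : ∀ i, θ i ≤ Real.pi := fun i => Complex.arg_le_pi _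
  -- law of cosines and cosine bound
  have key : ∀ i j, i ≠ j →
      Real.pi/6 < |θ i - θ j| ∧ |θ i - θ j| < 11*Real.pi/6 := by
    intro i j hij
    have hd := hdist i j hij
    have hsq : ((1:ℝ)/1.409)^2 ≤ dist (X i) (X j)^2 := by
      have : (0:ℝ) ≤ 1/1.409 := by norm_num
      nlinarith
    have hlaw : dist (X i) (X j)^2 =
        ‖X i‖^2 + ‖X j‖^2 - 2*(‖X i‖*‖X j‖*Real.cos (θ i - θ j)) := by
      rw [← hdz, ← habs, ← habs, Complex.sq_norm (z i - z j),
        Complex.normSq_sub, re_mul_conj _ _ (hz0 i) (hz0 j), ← Complex.sq_norm (z i),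
        ← Complex.sq_norm (z j)]
    have hcos : Real.cos (θ i - θ j) < Real.sqrt 3 / 2 := by
      apply cos_bound ‖X i‖ ‖X j‖ _ (hnorm i).1 (hnorm i).2 (hnorm j).1 (hnorm j).2
      rw [← hlaw]; exact hsq
    rw [← Real.cos_pi_div_six] at hcos
    have habs2 : |θ i - θ j| < 2*Real.pi := by
      have := hθlo i; have := hθlo j; have := hθhi i; have := hθhi j
      rw [abs_lt]; constructor <;> linarith
    have hpi := Real.pi_pos
    constructor
    · by_contra hle
      push_neg at hle
      have : Real.cos (Real.pi/6) ≤ Real.cos |θ i - θ j| := by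
        apply Real.cos_le_cos_of_nonneg_of_le_pi (abs_nonneg _) (by linarith) hle
      rw [Real.cos_abs] at this; linarith
    · by_contra hle
      push_neg at hle
      have hc2 : Real.cos |θ i - θ j| = Real.cos (2*Real.pi - |θ i - θ j|) := by
        rw [Real.cos_sub, Real.cos_two_pi, Real.sin_two_pi]; ring
      have : Real.cos (Real.pi/6) ≤ Real.cos (2*Real.pi - |θ i - θ j|) := by
        apply Real.cos_le_cos_of_nonneg_of_le_pi (by linarith) (by linarith) (by linarith)
      rw [← hc2, Real.cos_abs] at this; linarith
  -- pigeonhole via sorting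
  set σ := Tuple.sort θ with hσdef
  set y : Fin 12 → ℝ := θ ∘ σ with hydef
  have hmono : Monotone y := Tuple.monotone_sort θ
  have hy : ∀ k l : Fin 12, k ≠ l →
      Real.pi/6 < |y k - y l| ∧ |y k - y l| < 11*Real.pi/6 := by
    intro k l hkl
    exact key (σ k) (σ l) (fun h => hkl (σ.injective h))
  have gap : ∀ k : ℕ, (h : k < 11) →
      Real.pi/6 < y ⟨k+1, by omega⟩ - y ⟨k, by omega⟩ := by
    intro k h
    have hne : (⟨k, by omega⟩ : Fin 12) ≠ ⟨k+1, by omega⟩ := by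
      simp [Fin.ext_iff]
    have h1 := (hy _ _ hne.symm).1
    have h2 : y ⟨k, by omega⟩ ≤ y ⟨k+1, by omega⟩ := hmono (by simp [Fin.le_def])
    rwa [abs_of_nonneg (by linarith)] at h1
  have hlast : |y 11 - y 0| < 11*Real.pi/6 := (hy 11 0 (by decide)).2
  have h2' : y 0 ≤ y 11 := hmono (by decide)
  rw [abs_of_nonneg (by linarith)] at hlast
  have g0 := gap 0 (by norm_num); have g1 := gap 1 (by norm_num)
  have g2 := gap 2 (by norm_num); have g3 := gap 3 (by norm_num)
  have g4 := gap 4 (by norm_num); have g5 := gap 5 (by norm_num)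
  have g6 := gap 6 (by norm_num); have g7 := gap 7 (by norm_num)
  have g8 := gap 8 (by norm_num); have g9 := gap 9 (by norm_num)
  have g10 := gap 10 (by norm_num)
  have : (11 : Fin 12) = ⟨11, by omega⟩ := rfl
  have h0 : (0 : Fin 12) = ⟨0, by omega⟩ := rfl
  rw [this, h0] at hlast
  linarith
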